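/- If (a,b,c) is a Markov triple (positive integers with a² + b² + c² = 3abc) with a ≤ b ≤ c and c > 1, then the mutation c' = 3ab - c satisfies c' < c. Consequently (a,b,c') is a Markov triple with smaller maximum unless a = b = c. -/
import Mathlib

theorem stmt_11 (a b c : ℤ) (ha : 0 < a) (hb : 0 < b) (hc : 0 < c)
    (hab : a ≤ b) (hbc : b ≤ c) (hc1 : 1 < c)
    (h : a ^ 2 + b ^ 2 + c ^ 2 = 3 * a * b * c) :
    3 * a * b - c < c ∧
      a ^ 2 + b ^ 2 + (3 * a * b - c) ^ 2 = 3 * a * b * (3 * a * b - c) := by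
  refine ⟨?_, by linear_combination h⟩
  by_contra hle
  push_neg at hle
  -- hle : c ≤ 3*a*b - c, so c*(3ab - c) ≥ c², i.e. a²+b² ≥ c²
  have hcc : c ^ 2 ≤ a ^ 2 + b ^ 2 := by nlinarith
  have ha1 : a = 1 := by nlinarith
  subst ha1
  have hbc' : b = c := by nlinarith
  nlinarith
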